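/- With the binary decision tree encoding of a multivalued event: assigning to each internal node n an independent Boolean event b_n that is true with probability equal to the label of n's left edge, exactly one leaf's path-conjunction (the conjunction of literals b_n or ¬b_n along its root-to-leaf path) is satisfied under every valuation of the Boolean events, and the probability that the path-conjunction of leaf x is satisfied equals p(x). -/

import Mathlib

/-- Binary decision trees whose leaves carry outcomes from `X` and whose internal nodes carry
the probability labels of their two child edges. -/
inductive PTree (X : Type) : Type
  | leaf : X → PTree X
  | node : ℝ → ℝ → PTree X → PTree X → PTree X

/-- Edge labels are conditional probabilities at every internal node. -/
def PTree.valid {X : Type} : PTree X → Prop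
  | .leaf _ => True
  | .node pl pr l r => 0 ≤ pl ∧ 0 ≤ pr ∧ pl + pr = 1 ∧ l.valid ∧ r.valid

/-- Leaves with the product of edge labels on their root path and their root-to-leaf code
(`true` = going left). -/
def PTree.centries {X : Type} : PTree X → List (X × ℝ × List Bool)
  | .leaf x => [(x, 1, [])]
  | .node pl pr l r =>
      (l.centries.map fun e => (e.1, pl * e.2.1, true :: e.2.2)) ++
      (r.centries.map fun e => (e.1, pr * e.2.1, false :: e.2.2))

/-- Positions (root paths) of the internal nodes. -/
def PTree.nodesPos {X : Type} : PTree X → List (List Bool)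
  | .leaf _ => []
  | .node _ _ l r => [] :: (l.nodesPos.map (true :: ·) ++ r.nodesPos.map (false :: ·))

/-- The probability of the left edge (the probability that the Boolean event of that internal
node is true) at a given internal node position. -/
def PTree.lprob {X : Type} : PTree X → List Bool → ℝ
  | .leaf _, _ => 0
  | .node pl _ _ _, [] => pl
  | .node _ _ l _, true :: c => l.lprob c
  | .node _ _ _ r, false :: c => r.lprob c

lemma take_mem_nodesPos {X : Type} (t : PTree X) :
    ∀ e ∈ t.centries, ∀ i < e.2.2.length, e.2.2.take i ∈ t.nodesPos := by
  induction t with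
  | leaf x => rintro e he i hi; simp [PTree.centries] at he; subst he; simp at hi
  | node pl pr l r ihl ihr =>
    rintro e he i hi
    rcases List.mem_append.mp he with h1 | h1 <;> obtain ⟨a, ha, rfl⟩ := List.mem_map.mp h1
    · cases i with
      | zero => simp [PTree.nodesPos]
      | succ j =>
        have hj : j < a.2.2.length := by simpa using hi
        simp only [List.take_succ_cons, PTree.nodesPos, List.mem_cons, List.mem_append]
        exact Or.inr (Or.inl (List.mem_map.mpr ⟨_, ihl a ha j hj, rfl⟩))
    · cases i with
      | zero => simp [PTree.nodesPos]
      | succ j =>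
        have hj : j < a.2.2.length := by simpa using hi
        simp only [List.take_succ_cons, PTree.nodesPos, List.mem_cons, List.mem_append]
        exact Or.inr (Or.inr (List.mem_map.mpr ⟨_, ihr a ha j hj, rfl⟩))

lemma prod_code {X : Type} (t : PTree X) (hv : t.valid) :
    ∀ e ∈ t.centries,
      ∏ i ∈ Finset.range e.2.2.length,
        (if e.2.2.getD i false then t.lprob (e.2.2.take i)
         else 1 - t.lprob (e.2.2.take i)) = e.2.1 := by
  induction t with
  | leaf x => rintro e he; simp [PTree.centries] at he; subst he; simp
  | node pl pr l r ihl ihr =>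
    obtain ⟨hpl, hpr, hsum, hvl, hvr⟩ := hv
    rintro e he
    rcases List.mem_append.mp he with h1 | h1 <;> obtain ⟨a, ha, rfl⟩ := List.mem_map.mp h1
    · show (∏ i ∈ Finset.range (a.2.2.length + 1), _) = pl * a.2.1
      rw [Finset.prod_range_succ']
      have h0 : (if (true :: a.2.2).getD 0 false then
          PTree.lprob (.node pl pr l r) ((true :: a.2.2).take 0)
          else 1 - PTree.lprob (.node pl pr l r) ((true :: a.2.2).take 0)) = pl := by
        simp [PTree.lprob]
      rw [h0]
      have : ∀ i ∈ Finset.range a.2.2.length,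
          (if (true :: a.2.2).getD (i+1) false then
            PTree.lprob (.node pl pr l r) ((true :: a.2.2).take (i+1))
            else 1 - PTree.lprob (.node pl pr l r) ((true :: a.2.2).take (i+1)))
          = (if a.2.2.getD i false then l.lprob (a.2.2.take i)
             else 1 - l.lprob (a.2.2.take i)) := by
        intro i hi; simp [List.take_succ_cons, PTree.lprob]
      rw [Finset.prod_congr rfl this, ihl hvl a ha, mul_comm]
    · show (∏ i ∈ Finset.range (a.2.2.length + 1), _) = pr * a.2.1
      rw [Finset.prod_range_succ']
      have h0 : (if (false :: a.2.2).getD 0 false then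
          PTree.lprob (.node pl pr l r) ((false :: a.2.2).take 0)
          else 1 - PTree.lprob (.node pl pr l r) ((false :: a.2.2).take 0)) = pr := by
        simp [PTree.lprob]; linarith
      rw [h0]
      have : ∀ i ∈ Finset.range a.2.2.length,
          (if (false :: a.2.2).getD (i+1) false then
            PTree.lprob (.node pl pr l r) ((false :: a.2.2).take (i+1))
            else 1 - PTree.lprob (.node pl pr l r) ((false :: a.2.2).take (i+1)))
          = (if a.2.2.getD i false then r.lprob (a.2.2.take i)
             else 1 - r.lprob (a.2.2.take i)) := by
        intro i hi; simp [List.take_succ_cons, PTree.lprob]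
      rw [Finset.prod_congr rfl this, ihr hvr a ha, mul_comm]
lemma sum_powerset_cond (q : List Bool → ℝ) (g : List Bool → Bool) :
    ∀ (S T : Finset (List Bool)), T ⊆ S →
      ∑ s ∈ S.powerset,
        (if ∀ a ∈ T, (a ∈ s ↔ g a = true)
          then ∏ pos ∈ S, (if pos ∈ s then q pos else 1 - q pos) else 0)
      = ∏ a ∈ T, (if g a then q a else 1 - q a) := by
  intro S
  induction S using Finset.induction_on with
  | empty =>
    intro T hT
    simp [Finset.subset_empty.mp hT]
  | @insert b S' hb ih =>
    intro T hT
    rw [Finset.sum_powerset_insert hb]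
    by_cases hbT : b ∈ T
    · set T' := T.erase b with hT'
      have hTi : T = insert b T' := by simp [hT', Finset.insert_erase hbT]
      have hbT' : b ∉ T' := Finset.notMem_erase _ _
      have hT'S : T' ⊆ S' := by
        intro a haT'
        have := hT (Finset.mem_of_mem_erase haT')
        rcases Finset.mem_insert.mp this with rfl | h
        · exact absurd haT' hbT'
        · exact h
      cases hgb : g b
      · -- g b = false : second sum zero, first sum = (1-q b) * IH
        have hz : ∑ s ∈ S'.powerset,
            (if ∀ a ∈ T, (a ∈ insert b s ↔ g a = true)
              then ∏ pos ∈ insert b S', (if pos ∈ insert b s then q pos else 1 - q pos)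
              else 0) = 0 := by
          refine Finset.sum_eq_zero fun s hs => ?_
          rw [if_neg]
          intro hcond
          have := (hcond b hbT).mp (Finset.mem_insert_self b s)
          simp [hgb] at this
        rw [hz, add_zero]
        have hmain : ∀ s ∈ S'.powerset,
            (if ∀ a ∈ T, (a ∈ s ↔ g a = true)
              then ∏ pos ∈ insert b S', (if pos ∈ s then q pos else 1 - q pos) else 0)
            = (1 - q b) * (if ∀ a ∈ T', (a ∈ s ↔ g a = true)
              then ∏ pos ∈ S', (if pos ∈ s then q pos else 1 - q pos) else 0) := by
          intro s hs
          have hsS' := Finset.mem_powerset.mp hs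
          have hbs : b ∉ s := fun h => hb (hsS' h)
          rw [Finset.prod_insert hb, if_neg hbs]
          have hiff : (∀ a ∈ T, (a ∈ s ↔ g a = true)) ↔ (∀ a ∈ T', (a ∈ s ↔ g a = true)) := by
            rw [hTi, Finset.forall_mem_insert]
            constructor
            · exact fun h => h.2
            · intro h
              refine ⟨?_, h⟩
              simp [hbs, hgb]
          rw [if_congr hiff rfl rfl]
          by_cases hc : ∀ a ∈ T', (a ∈ s ↔ g a = true) <;> simp [hc]
        rw [Finset.sum_congr rfl hmain, ← Finset.mul_sum, ih T' hT'S, hTi,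
          Finset.prod_insert hbT', hgb]
        simp
      · -- g b = true : first sum zero, second = q b * IH
        have hz : ∑ s ∈ S'.powerset,
            (if ∀ a ∈ T, (a ∈ s ↔ g a = true)
              then ∏ pos ∈ insert b S', (if pos ∈ s then q pos else 1 - q pos)
              else 0) = 0 := by
          refine Finset.sum_eq_zero fun s hs => ?_
          have hsS' := Finset.mem_powerset.mp hs
          have hbs : b ∉ s := fun h => hb (hsS' h)
          rw [if_neg]
          intro hcond
          exact hbs ((hcond b hbT).mpr hgb)
        rw [hz, zero_add]
        have hmain : ∀ s ∈ S'.powerset,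
            (if ∀ a ∈ T, (a ∈ insert b s ↔ g a = true)
              then ∏ pos ∈ insert b S', (if pos ∈ insert b s then q pos else 1 - q pos) else 0)
            = q b * (if ∀ a ∈ T', (a ∈ s ↔ g a = true)
              then ∏ pos ∈ S', (if pos ∈ s then q pos else 1 - q pos) else 0) := by
          intro s hs
          have hsS' := Finset.mem_powerset.mp hs
          rw [Finset.prod_insert hb, if_pos (Finset.mem_insert_self b s)]
          have hprod : ∏ pos ∈ S', (if pos ∈ insert b s then q pos else 1 - q pos)
              = ∏ pos ∈ S', (if pos ∈ s then q pos else 1 - q pos) := by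
            refine Finset.prod_congr rfl fun pos hpos => ?_
            have : pos ≠ b := fun h => hb (h ▸ hpos)
            simp [Finset.mem_insert, this]
          rw [hprod]
          have hiff : (∀ a ∈ T, (a ∈ insert b s ↔ g a = true))
              ↔ (∀ a ∈ T', (a ∈ s ↔ g a = true)) := by
            rw [hTi, Finset.forall_mem_insert]
            constructor
            · intro h a ha
              have hane : a ≠ b := fun hh => hbT' (hh ▸ ha)
              rw [← h.2 a ha]
              simp [Finset.mem_insert, hane]
            · intro h
              refine ⟨by simp [hgb], fun a ha => ?_⟩
              have hane : a ≠ b := fun hh => hbT' (hh ▸ ha)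
              rw [← h a ha]
              simp [Finset.mem_insert, hane]
          rw [if_congr hiff rfl rfl]
          by_cases hc : ∀ a ∈ T', (a ∈ s ↔ g a = true) <;> simp [hc]
        rw [Finset.sum_congr rfl hmain, ← Finset.mul_sum, ih T' hT'S, hTi,
          Finset.prod_insert hbT', hgb]
        simp
    · -- b ∉ T
      have hTS' : T ⊆ S' := fun a ha => by
        rcases Finset.mem_insert.mp (hT ha) with rfl | h
        · exact absurd ha hbT
        · exact h
      have hmain : ∀ s ∈ S'.powerset,
          (if ∀ a ∈ T, (a ∈ s ↔ g a = true)
            then ∏ pos ∈ insert b S', (if pos ∈ s then q pos else 1 - q pos) else 0)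
          + (if ∀ a ∈ T, (a ∈ insert b s ↔ g a = true)
            then ∏ pos ∈ insert b S', (if pos ∈ insert b s then q pos else 1 - q pos) else 0)
          = (if ∀ a ∈ T, (a ∈ s ↔ g a = true)
            then ∏ pos ∈ S', (if pos ∈ s then q pos else 1 - q pos) else 0) := by
        intro s hs
        have hsS' := Finset.mem_powerset.mp hs
        have hbs : b ∉ s := fun h => hb (hsS' h)
        have hprod : ∏ pos ∈ S', (if pos ∈ insert b s then q pos else 1 - q pos)
            = ∏ pos ∈ S', (if pos ∈ s then q pos else 1 - q pos) := by
          refine Finset.prod_congr rfl fun pos hpos => ?_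
          have : pos ≠ b := fun h => hb (h ▸ hpos)
          simp [Finset.mem_insert, this]
        have hiff : (∀ a ∈ T, (a ∈ insert b s ↔ g a = true))
            ↔ (∀ a ∈ T, (a ∈ s ↔ g a = true)) := by
          constructor <;> intro h a ha <;>
            have hane : a ≠ b := fun hh => hbT (hh ▸ ha)
          · rw [← h a ha]; simp [Finset.mem_insert, hane]
          · rw [← h a ha]; simp [Finset.mem_insert, hane]
        rw [Finset.prod_insert hb, Finset.prod_insert hb, if_neg hbs,
          if_pos (Finset.mem_insert_self b s), hprod, if_congr hiff rfl rfl]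
        by_cases hc : ∀ a ∈ T, (a ∈ s ↔ g a = true)
        · rw [if_pos hc, if_pos hc, if_pos hc]; ring
        · simp [hc]
      rw [← Finset.sum_add_distrib, Finset.sum_congr rfl hmain, ih T hTS']
lemma exists_unique_entry {X : Type} (t : PTree X) (ν : List Bool → Bool) :
    ∃! e : X × ℝ × List Bool, e ∈ t.centries ∧
      (∀ i : ℕ, ∀ h : i < e.2.2.length, ν (e.2.2.take i) = e.2.2.get ⟨i, h⟩) := by
  induction t generalizing ν with
  | leaf x =>
    refine ⟨(x, 1, []), ⟨by simp [PTree.centries], ?_⟩, ?_⟩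
    · intro i h; simp at h
    · rintro e ⟨he, -⟩
      simpa [PTree.centries] using he
  | node pl pr l r ihl ihr =>
    cases hb : ν [] with
    | true =>
      obtain ⟨el, ⟨hmem, hcond⟩, huniq⟩ := ihl (fun c => ν (true :: c))
      refine ⟨(el.1, pl * el.2.1, true :: el.2.2), ⟨?_, ?_⟩, ?_⟩
      · exact List.mem_append_left _ (List.mem_map.mpr ⟨el, hmem, rfl⟩)
      · intro i h
        cases i with
        | zero => simpa using hb
        | succ j =>
          have hj : j < el.2.2.length := by simpa using h
          simpa [List.take_succ_cons] using hcond j hj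
      · rintro e' ⟨hmem', hcond'⟩
        rcases List.mem_append.mp hmem' with h1 | h1
        · obtain ⟨a, ha, rfl⟩ := List.mem_map.mp h1
          have : a = el := by
            refine huniq a ⟨ha, ?_⟩
            intro i hi
            have hi' : i + 1 < (true :: a.2.2).length := by simpa using Nat.succ_lt_succ hi
            simpa [List.take_succ_cons] using hcond' (i + 1) hi'
          rw [this]
        · obtain ⟨a, ha, rfl⟩ := List.mem_map.mp h1
          have h0 : (0 : ℕ) < (false :: a.2.2).length := by simp
          have := hcond' 0 h0
          simp [hb] at this
    | false =>
      obtain ⟨er, ⟨hmem, hcond⟩, huniq⟩ := ihr (fun c => ν (false :: c))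
      refine ⟨(er.1, pr * er.2.1, false :: er.2.2), ⟨?_, ?_⟩, ?_⟩
      · exact List.mem_append_right _ (List.mem_map.mpr ⟨er, hmem, rfl⟩)
      · intro i h
        cases i with
        | zero => simpa using hb
        | succ j =>
          have hj : j < er.2.2.length := by simpa using h
          simpa [List.take_succ_cons] using hcond j hj
      · rintro e' ⟨hmem', hcond'⟩
        rcases List.mem_append.mp hmem' with h1 | h1
        · obtain ⟨a, ha, rfl⟩ := List.mem_map.mp h1
          have h0 : (0 : ℕ) < (true :: a.2.2).length := by simp
          have := hcond' 0 h0
          simp [hb] at this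
        · obtain ⟨a, ha, rfl⟩ := List.mem_map.mp h1
          have : a = er := by
            refine huniq a ⟨ha, ?_⟩
            intro i hi
            have hi' : i + 1 < (false :: a.2.2).length := by simpa using Nat.succ_lt_succ hi
            simpa [List.take_succ_cons] using hcond' (i + 1) hi'
          rw [this]

/-- With an independent Boolean event at every internal node (true with probability the label
of its left edge): (1) under every valuation of the events, exactly one leaf's path-conjunction
is satisfied, and (2) the probability that the path-conjunction of the leaf of outcome `x` is
satisfied equals `p x`. Valuations are modeled as functions on node positions in (1) and as
subsets of the finite set of internal node positions in (2). -/
theorem decision_tree_conjunctions_partition {X : Type} [Fintype X] [DecidableEq X]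
    (p : X → ℝ) (hp : ∀ x, 0 < p x) (hp1 : ∑ x : X, p x = 1)
    (t : PTree X) (hval : t.valid)
    (hnodup : (t.centries.map (fun e => e.1)).Nodup)
    (hsurj : ∀ x : X, x ∈ t.centries.map (fun e => e.1))
    (hprob : ∀ e ∈ t.centries, e.2.1 = p e.1) :
    (∀ ν : List Bool → Bool,
      ∃! e : X × ℝ × List Bool, e ∈ t.centries ∧
        (∀ i : ℕ, ∀ h : i < e.2.2.length, ν (e.2.2.take i) = e.2.2.get ⟨i, h⟩)) ∧
    (∀ e ∈ t.centries,
      ∑ s ∈ t.nodesPos.toFinset.powerset,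
        (if (∀ i : ℕ, ∀ h : i < e.2.2.length,
              ((e.2.2.take i ∈ s) ↔ e.2.2.get ⟨i, h⟩ = true))
          then ∏ pos ∈ t.nodesPos.toFinset,
                (if pos ∈ s then t.lprob pos else 1 - t.lprob pos)
          else 0) = p e.1) := by
  constructor
  · exact fun ν => exists_unique_entry t ν
  · intro e he
    set c := e.2.2 with hc
    set T : Finset (List Bool) := (Finset.range c.length).image (c.take ·) with hT
    set g : List Bool → Bool := fun a => c.getD a.length false with hg
    have hlen : ∀ i < c.length, (c.take i).length = i := by
      intro i hi; simp [List.length_take]; omega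
    have hTsub : T ⊆ t.nodesPos.toFinset := by
      intro a ha
      obtain ⟨i, hi, rfl⟩ := Finset.mem_image.mp ha
      rw [Finset.mem_range] at hi
      exact List.mem_toFinset.mpr (take_mem_nodesPos t e he i hi)
    have hga : ∀ i (hi : i < c.length), g (c.take i) = c.get ⟨i, hi⟩ := by
      intro i hi
      simp only [hg, hlen i hi]
      rw [List.getD_eq_getElem _ _ hi, List.get_eq_getElem]
    have hiff : ∀ s : Finset (List Bool),
        (∀ i : ℕ, ∀ h : i < e.2.2.length, ((e.2.2.take i ∈ s) ↔ e.2.2.get ⟨i, h⟩ = true))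
        ↔ (∀ a ∈ T, (a ∈ s ↔ g a = true)) := by
      intro s
      constructor
      · intro h a ha
        obtain ⟨i, hi, rfl⟩ := Finset.mem_image.mp ha
        rw [Finset.mem_range] at hi
        rw [hga i hi]
        exact h i hi
      · intro h i hi
        rw [← hga i hi]
        exact h (c.take i) (Finset.mem_image.mpr ⟨i, Finset.mem_range.mpr hi, rfl⟩)
    calc ∑ s ∈ t.nodesPos.toFinset.powerset,
          (if (∀ i : ℕ, ∀ h : i < e.2.2.length,
                ((e.2.2.take i ∈ s) ↔ e.2.2.get ⟨i, h⟩ = true))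
            then ∏ pos ∈ t.nodesPos.toFinset,
                  (if pos ∈ s then t.lprob pos else 1 - t.lprob pos)
            else 0)
        = ∑ s ∈ t.nodesPos.toFinset.powerset,
          (if (∀ a ∈ T, (a ∈ s ↔ g a = true))
            then ∏ pos ∈ t.nodesPos.toFinset,
                  (if pos ∈ s then t.lprob pos else 1 - t.lprob pos)
            else 0) := by
          exact Finset.sum_congr rfl fun s _ => if_congr (hiff s) rfl rfl
      _ = ∏ a ∈ T, (if g a then t.lprob a else 1 - t.lprob a) :=
          sum_powerset_cond t.lprob g _ T hTsub
      _ = ∏ i ∈ Finset.range c.length,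
            (if g (c.take i) then t.lprob (c.take i) else 1 - t.lprob (c.take i)) := by
          rw [hT, Finset.prod_image]
          intro i hi j hj hij
          rw [Finset.mem_coe, Finset.mem_range] at hi hj
          have := congrArg List.length hij
          rwa [hlen i hi, hlen j hj] at this
      _ = ∏ i ∈ Finset.range c.length,
            (if c.getD i false then t.lprob (c.take i) else 1 - t.lprob (c.take i)) := by
          refine Finset.prod_congr rfl fun i hi => ?_
          rw [Finset.mem_range] at hi
          rw [show g (c.take i) = c.getD i false by simp only [hg, hlen i hi]]
      _ = e.2.1 := prod_code t hval e he
      _ = p e.1 := hprob e he
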